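/- The twisted sphere X is compact and locally Hausdorff, i.e., every point of X has an open neighborhood whose subspace topology is Hausdorff. -/

import Mathlib

noncomputable section

/-- The 2-sphere, realized as the unit sphere `{(c,z) : |c|² + z² = 1}` in `ℂ × ℝ`,
with the subspace topology. -/
def TwoSphere : Set (ℂ × ℝ) := {p | ‖p.1‖ ^ 2 + p.2 ^ 2 = 1}

/-- The relation `r₀` on `S²`: `r₀ (c,z) (c',z')` iff `z ≠ 0`, `c' = -c` and `z' = z`. -/
def sphRel (a b : TwoSphere) : Prop :=
  a.1.2 ≠ 0 ∧ b.1.1 = -a.1.1 ∧ b.1.2 = a.1.2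

/-- The twisted sphere `X`: the quotient of `S²` by the equivalence relation generated
by `r₀`, with the quotient topology. -/
abbrev TwistedSphere : Type := Quot (Relation.EqvGen sphRel)

/-- The quotient map `q : S² → X`. -/
abbrev sphQ : TwoSphere → TwistedSphere := Quot.mk (Relation.EqvGen sphRel)

/-- Characterization of the equivalence relation generated by `sphRel`. -/
lemma eqvGen_sphRel_iff {a b : TwoSphere} :
    Relation.EqvGen sphRel a b ↔
      a = b ∨ (a.1.2 ≠ 0 ∧ b.1.1 = -a.1.1 ∧ b.1.2 = a.1.2) := by
  constructor
  · intro h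
    induction h with
    | rel x y hxy => exact Or.inr hxy
    | refl x => exact Or.inl rfl
    | symm x y _ ih =>
      rcases ih with h | ⟨hz, hc, hz'⟩
      · exact Or.inl h.symm
      · refine Or.inr ⟨by rw [hz']; exact hz, by rw [hc, neg_neg], hz'.symm⟩
    | trans x y z _ _ ih₁ ih₂ =>
      rcases ih₁ with h1 | ⟨hz1, hc1, hw1⟩
      · rwa [h1]
      · rcases ih₂ with h2 | ⟨hz2, hc2, hw2⟩
        · exact Or.inr ⟨hz1, h2 ▸ hc1, h2 ▸ hw1⟩
        · left
          apply Subtype.ext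
          apply Prod.ext
          · rw [hc2, hc1, neg_neg]
          · rw [hw2, hw1]
  · rintro (rfl | h)
    · exact Relation.EqvGen.refl a
    · exact Relation.EqvGen.rel _ _ h

/-- The invariant map `(c,z) ↦ (c², z)`, descended to the quotient. -/
def sphF : TwistedSphere → ℂ × ℝ :=
  Quot.lift (fun p : TwoSphere => (p.1.1 ^ 2, p.1.2))
    (by
      intro a b h
      rcases eqvGen_sphRel_iff.1 h with rfl | ⟨_, hc, hw⟩
      · rfl
      · simp only [Prod.mk.injEq]
        exact ⟨by rw [hc, neg_sq], hw.symm⟩)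

lemma eqvGen_idem {α} {r : α → α → Prop} {a b : α}
    (h : Relation.EqvGen (Relation.EqvGen r) a b) : Relation.EqvGen r a b := by
  induction h with
  | rel _ _ h => exact h
  | refl => exact .refl _
  | symm _ _ _ ih => exact .symm _ _ ih
  | trans _ _ _ _ _ ih1 ih2 => exact .trans _ _ _ ih1 ih2

lemma sphQ_exact {a b : TwoSphere} (h : sphQ a = sphQ b) :
    a = b ∨ (a.1.2 ≠ 0 ∧ b.1.1 = -a.1.1 ∧ b.1.2 = a.1.2) :=
  eqvGen_sphRel_iff.1 (eqvGen_idem (Quot.eqvGen_exact h))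

lemma continuous_sphF : Continuous sphF := by
  exact continuous_quot_lift _
    (((continuous_pow 2).comp (continuous_fst.comp continuous_subtype_val)).prodMk
      (continuous_snd.comp continuous_subtype_val))

lemma sphF_mk (a : TwoSphere) : sphF (sphQ a) = (a.1.1 ^ 2, a.1.2) := rfl

theorem stmt_6 :
    CompactSpace TwistedSphere ∧
    (∀ x : TwistedSphere, ∃ O : Set TwistedSphere, IsOpen O ∧ x ∈ O ∧ T2Space ↥O) := by
  have hcompS : IsCompact TwoSphere := by
    have hclosed : IsClosed TwoSphere := by
      have : TwoSphere = (fun p : ℂ × ℝ => ‖p.1‖ ^ 2 + p.2 ^ 2) ⁻¹' {1} := rfl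
      rw [this]
      exact IsClosed.preimage (by continuity) isClosed_singleton
    have hbdd : Bornology.IsBounded TwoSphere := by
      have : TwoSphere ⊆ Metric.closedBall (0 : ℂ × ℝ) 1 := by
        intro p hp
        simp only [Metric.mem_closedBall, dist_zero_right]
        have hp' : ‖p.1‖ ^ 2 + p.2 ^ 2 = 1 := hp
        have h1 : ‖p.1‖ ≤ 1 := by nlinarith [norm_nonneg p.1, sq_nonneg p.2]
        have h2 : |p.2| ≤ 1 := by nlinarith [abs_nonneg p.2, sq_abs p.2, norm_nonneg p.1, sq_nonneg ‖p.1‖]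
        calc ‖p‖ = max ‖p.1‖ ‖p.2‖ := rfl
          _ ≤ 1 := max_le (by simpa using h1) (by simpa using h2)
      exact (Metric.isBounded_closedBall).subset this
    exact Metric.isCompact_of_isClosed_isBounded hclosed hbdd
  haveI : CompactSpace TwoSphere := isCompact_iff_compactSpace.1 hcompS
  have hcompX : CompactSpace TwistedSphere := Quot.compactSpace
  refine ⟨hcompX, ?_⟩
  intro x
  obtain ⟨a, rfl⟩ : ∃ a, sphQ a = x := ⟨x.out, Quot.out_eq x⟩
  -- helper for building T2 from injectivity of sphF on O
  have key : ∀ O : Set TwistedSphere, (∀ x ∈ O, ∀ y ∈ O, sphF x = sphF y → x = y) →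
      T2Space ↥O := by
    intro O hinj
    refine T2Space.of_injective_continuous (f := fun o : ↥O => sphF o.1) ?_ ?_
    · intro u v huv
      exact Subtype.ext (hinj u.1 u.2 v.1 v.2 huv)
    · exact continuous_sphF.comp continuous_subtype_val
  by_cases hz : a.1.2 = 0
  · -- equator point: use the hemisphere around c₀ := a.1.1
    set c₀ := a.1.1 with hc₀
    have hc₀ne : ‖c₀‖ = 1 := by
      have := a.2
      simp only [TwoSphere, Set.mem_setOf_eq, hz] at this
      nlinarith [norm_nonneg a.1.1]
    set V : Set TwoSphere := {p | 0 < (p.1.1 * (starRingEnd ℂ) c₀).re} with hV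
    refine ⟨sphQ '' V, ?_, ⟨a, ?_, rfl⟩, ?_⟩
    · -- openness
      rw [isOpen_coinduced]
      have hpre : sphQ ⁻¹' (sphQ '' V) =
          V ∪ {p : TwoSphere | p.1.2 ≠ 0 ∧ 0 < (-p.1.1 * (starRingEnd ℂ) c₀).re} := by
        ext p
        simp only [Set.mem_preimage, Set.mem_image, Set.mem_union, Set.mem_setOf_eq]
        constructor
        · rintro ⟨b, hb, hbp⟩
          rcases sphQ_exact hbp with rfl | ⟨hbz, hc, hw⟩
          · exact Or.inl hb
          · right
            refine ⟨by rw [hw]; exact hbz, ?_⟩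
            rw [hc, neg_neg]
            exact hb
        · rintro (hp | ⟨hpz, hpc⟩)
          · exact ⟨p, hp, rfl⟩
          · refine ⟨⟨(-p.1.1, p.1.2), ?_⟩, ?_, ?_⟩
            · show ‖-p.1.1‖ ^ 2 + p.1.2 ^ 2 = 1
              rw [norm_neg]
              exact p.2
            · exact hpc
            · apply Quot.sound
              apply eqvGen_sphRel_iff.2
              exact Or.inr ⟨hpz, by simp, rfl⟩
      rw [hpre]
      apply IsOpen.union
      · exact isOpen_induced_iff.2 ⟨{q : ℂ × ℝ | 0 < (q.1 * (starRingEnd ℂ) c₀).re}, by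
          refine isOpen_lt continuous_const ?_
          exact Complex.continuous_re.comp ((continuous_fst).mul continuous_const), rfl⟩
      · apply IsOpen.inter
        · exact isOpen_induced_iff.2 ⟨{q : ℂ × ℝ | q.2 ≠ 0},
            isOpen_ne_fun continuous_snd continuous_const, rfl⟩
        · exact isOpen_induced_iff.2 ⟨{q : ℂ × ℝ | 0 < (-q.1 * (starRingEnd ℂ) c₀).re}, by
            refine isOpen_lt continuous_const ?_
            exact Complex.continuous_re.comp ((continuous_fst.neg).mul continuous_const), rfl⟩
    · -- a ∈ V
      show 0 < (a.1.1 * (starRingEnd ℂ) c₀).re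
      rw [hc₀, Complex.mul_conj]
      simp only [Complex.ofReal_re, Complex.normSq_eq_norm_sq, ← hc₀, hc₀ne]
      norm_num
    · -- T2
      apply key
      rintro x ⟨b, hb, rfl⟩ y ⟨d, hd, rfl⟩ hfd
      rw [sphF_mk, sphF_mk, Prod.mk.injEq] at hfd
      have hc : d.1.1 = b.1.1 ∨ d.1.1 = -b.1.1 := by
        have := sq_eq_sq_iff_eq_or_eq_neg.1 hfd.1.symm
        exact this
      rcases hc with h | h
      · have : b = d := Subtype.ext (Prod.ext h.symm hfd.2)
        rw [this]
      · exfalso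
        have hbpos : 0 < (b.1.1 * (starRingEnd ℂ) c₀).re := hb
        have hdpos : 0 < (d.1.1 * (starRingEnd ℂ) c₀).re := hd
        rw [h, neg_mul, Complex.neg_re] at hdpos
        linarith
  · -- off the equator: use the open hemisphere containing a
    rcases lt_or_gt_of_ne hz with hneg | hpos
    · -- z < 0
      set V : Set TwoSphere := {p | p.1.2 < 0} with hV
      refine ⟨sphQ '' V, ?_, ⟨a, hneg, rfl⟩, ?_⟩
      · rw [isOpen_coinduced]
        have hpre : sphQ ⁻¹' (sphQ '' V) = V := by
          ext p
          simp only [Set.mem_preimage, Set.mem_image, Set.mem_setOf_eq]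
          constructor
          · rintro ⟨b, hb, hbp⟩
            rcases sphQ_exact hbp with rfl | ⟨hbz, hc, hw⟩
            · exact hb
            · show p.1.2 < 0
              rw [hw]; exact hb
          · intro hp; exact ⟨p, hp, rfl⟩
        rw [hpre]
        exact isOpen_induced_iff.2 ⟨{q : ℂ × ℝ | q.2 < 0},
          isOpen_lt continuous_snd continuous_const, rfl⟩
      · apply key
        rintro x ⟨b, hb, rfl⟩ y ⟨d, hd, rfl⟩ hfd
        rw [sphF_mk, sphF_mk, Prod.mk.injEq] at hfd
        rcases sq_eq_sq_iff_eq_or_eq_neg.1 hfd.1.symm with h | h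
        · have hbd : b = d := Subtype.ext (Prod.ext h.symm hfd.2)
          rw [hbd]
        · apply Quot.sound
          apply eqvGen_sphRel_iff.2
          exact Or.inr ⟨ne_of_lt hb, h, hfd.2.symm⟩
    · -- z > 0
      set V : Set TwoSphere := {p | 0 < p.1.2} with hV
      refine ⟨sphQ '' V, ?_, ⟨a, hpos, rfl⟩, ?_⟩
      · rw [isOpen_coinduced]
        have hpre : sphQ ⁻¹' (sphQ '' V) = V := by
          ext p
          simp only [Set.mem_preimage, Set.mem_image, Set.mem_setOf_eq]
          constructor
          · rintro ⟨b, hb, hbp⟩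
            rcases sphQ_exact hbp with rfl | ⟨hbz, hc, hw⟩
            · exact hb
            · show 0 < p.1.2
              rw [hw]; exact hb
          · intro hp; exact ⟨p, hp, rfl⟩
        rw [hpre]
        exact isOpen_induced_iff.2 ⟨{q : ℂ × ℝ | 0 < q.2},
          isOpen_lt continuous_const continuous_snd, rfl⟩
      · apply key
        rintro x ⟨b, hb, rfl⟩ y ⟨d, hd, rfl⟩ hfd
        rw [sphF_mk, sphF_mk, Prod.mk.injEq] at hfd
        rcases sq_eq_sq_iff_eq_or_eq_neg.1 hfd.1.symm with h | h
        · have hbd : b = d := Subtype.ext (Prod.ext h.symm hfd.2)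
          rw [hbd]
        · apply Quot.sound
          apply eqvGen_sphRel_iff.2
          exact Or.inr ⟨ne_of_gt hb, h, hfd.2.symm⟩
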